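/- arXiv:2312.07603 — 7 statements merged into one kernel-verified Lean document; each statement's English description precedes it below -/
import Mathlib

section
/- Let (r(1),𝒞(1)) and (r*,𝒞*) be equilibria, and let P be an alternating path r(1) → 𝒞(2) → r(3) → 𝒞(4) → ⋯ → r(l) → 𝒞* of length l that starts at the row strategy r(1) and ends at the column profile 𝒞*. Define the sequence of profiles Q by: Q₁ = (r(1),𝒞(1)); Q₂ = (r(1),𝒞(2)); for 3 ≤ t ≤ l, Q_t = (r(t), 𝒞(t−1)) when t is odd and Q_t = (r(t−1), 𝒞(t)) when t is even; Q_{l+1} = (r(l), 𝒞*); Q_{l+2} = (r*, 𝒞*). Then Q is a transformation path from (r(1),𝒞(1)) to (r*,𝒞*), its total cost equals exactly 2·Cost(P), and its length (number of steps) is l+1, one more than the length of P. -/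
open Finset

/-- Reward needed to incentivize the row player to play `i'` when the columns play `𝒞`. -/
noncomputable def Trow {m n k : ℕ} [NeZero m] (R : Fin m → Fin n → ℝ)
    (𝒞 : Fin k → Fin n) (i' : Fin m) : ℝ :=
  (univ.sup' univ_nonempty fun i => ∑ j, R i (𝒞 j)) - ∑ j, R i' (𝒞 j)

/-- Reward needed to incentivize the column players to play `𝒞'` when the row plays `i`. -/
noncomputable def Tcol {m n k : ℕ} [NeZero n] (C : Fin m → Fin n → ℝ)
    (i : Fin m) (𝒞' : Fin k → Fin n) : ℝ :=
  k * (univ.sup' univ_nonempty fun q => C i q) - ∑ j, C i (𝒞' j)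

/-- `(i, 𝒞)` is an equilibrium if `T_𝒞(i) = 0` and `T_i(𝒞) = 0`. -/
def IsEquilibrium {m n k : ℕ} [NeZero m] [NeZero n] (R C : Fin m → Fin n → ℝ)
    (i : Fin m) (𝒞 : Fin k → Fin n) : Prop :=
  Trow R 𝒞 i = 0 ∧ Tcol C i 𝒞 = 0

/-- Given equilibria `(r(1),𝒞(1))` and `(r*,𝒞*)` and an alternating path
`P : r(1) → 𝒞(2) → r(3) → 𝒞(4) → ⋯ → r(l) → 𝒞*` of (odd) length `l`, the sequence `Q` with
`Q₁ = (r(1),𝒞(1))`, `Q₂ = (r(1),𝒞(2))`, `Q_t = (r(t),𝒞(t-1))` for odd `3 ≤ t ≤ l`,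
`Q_t = (r(t-1),𝒞(t))` for even `3 ≤ t ≤ l`, `Q_{l+1} = (r(l),𝒞*)`, `Q_{l+2} = (r*,𝒞*)` is a
transformation path from `(r(1),𝒞(1))` to `(r*,𝒞*)` whose total cost is exactly `2·Cost(P)`
and whose length (number of steps, `l+1`) is one more than the length of `P`. -/
theorem transformation_path_from_alternating_path
    (m n k : ℕ) [NeZero m] [NeZero n]
    (R C : Fin m → Fin n → ℝ)
    (l : ℕ) (hl : Odd l) (hl1 : 1 ≤ l)
    (r : ℕ → Fin m) (𝒞 : ℕ → Fin k → Fin n)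
    (rstar : Fin m) (Cstar : Fin k → Fin n)
    (hinit : IsEquilibrium R C (r 1) (𝒞 1))
    (htarget : IsEquilibrium R C rstar Cstar)
    (hend : 𝒞 (l + 1) = Cstar)
    (costP : ℝ)
    (hcostP : costP = ∑ t ∈ Finset.Ico 1 (l + 1),
      if Odd t then Tcol C (r t) (𝒞 (t+1)) else Trow R (𝒞 t) (r (t+1)))
    (Q : ℕ → Fin m × (Fin k → Fin n))
    (hQ1 : Q 1 = (r 1, 𝒞 1))
    (hQ2 : Q 2 = (r 1, 𝒞 2))
    (hQodd : ∀ t, 3 ≤ t → t ≤ l → Odd t → Q t = (r t, 𝒞 (t - 1)))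
    (hQeven : ∀ t, 3 ≤ t → t ≤ l → Even t → Q t = (r (t - 1), 𝒞 t))
    (hQl1 : Q (l + 1) = (r l, Cstar))
    (hQl2 : Q (l + 2) = (rstar, Cstar)) :
    Q 1 = (r 1, 𝒞 1) ∧ Q (l + 2) = (rstar, Cstar) ∧
      (∑ t ∈ Finset.Ico 1 (l + 2),
        (Tcol C (Q t).1 (Q (t+1)).2 + Trow R (Q t).2 (Q (t+1)).1)) = 2 * costP := by
  refine ⟨hQ1, hQl2, ?_⟩
  set F : ℕ → ℝ := fun t => if 1 ≤ t ∧ t ≤ l then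
      (if Odd t then Tcol C (r t) (𝒞 (t+1)) else Trow R (𝒞 t) (r (t+1))) else 0 with hF
  have hcost2 : costP = ∑ t ∈ Finset.Ico 1 (l+1), F t := by
    rw [hcostP]
    refine Finset.sum_congr rfl fun t ht => ?_
    simp only [Finset.mem_Ico] at ht
    simp [hF, ht.1, Nat.lt_succ_iff.mp ht.2]
  have key : ∀ t, 1 ≤ t → t ≤ l + 1 →
      Tcol C (Q t).1 (Q (t+1)).2 + Trow R (Q t).2 (Q (t+1)).1 = F (t-1) + F t := by
    intro t ht1 ht2
    rcases eq_or_lt_of_le ht1 with h1 | h1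
    · -- t = 1
      rw [← h1]
      simp [hF, hQ1, hQ2, hinit.1, hl1]
    · rcases eq_or_lt_of_le ht2 with h2 | h2
      · -- t = l + 1
        subst h2
        have hne : Odd l := hl
        simp [hF, hQl1, hQl2, htarget.1, hl1, hne, hend]
      · -- 2 ≤ t ≤ l
        have ht2' : t ≤ l := Nat.lt_succ_iff.mp h2
        have ht1' : 2 ≤ t := h1
        have htc : t - 1 + 1 = t := Nat.sub_add_cancel ht1
        rcases Nat.even_or_odd t with he | ho
        · -- t even
          have hto : Odd (t+1) := Even.add_one he
          have htl : t < l := lt_of_le_of_ne ht2' (fun h => (Nat.not_odd_iff_even.mpr (h ▸ he)) hl)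
          have hq1 : Q t = (r (t-1), 𝒞 t) := by
            rcases eq_or_lt_of_le ht1' with h3 | h3
            · rw [← h3]; exact hQ2
            · exact hQeven t h3 ht2' he
          have hq2 : Q (t+1) = (r (t+1), 𝒞 t) := by
            have := hQodd (t+1) (by omega) (by omega) hto
            rwa [Nat.add_sub_cancel] at this
          have hodd1 : Odd (t-1) := by
            rcases he with ⟨u, hu⟩; exact ⟨u-1, by omega⟩
          have ha : 1 ≤ t - 1 := by omega
          have hb : t - 1 ≤ l := by omega
          have hFa : F (t-1) = Tcol C (r (t-1)) (𝒞 t) := by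
            simp [hF, ha, hb, hodd1, htc]
          have hFb : F t = Trow R (𝒞 t) (r (t+1)) := by
            simp [hF, ht1, ht2', Nat.not_odd_iff_even.mpr he]
          rw [hq1, hq2, hFa, hFb]
        · -- t odd, 3 ≤ t ≤ l
          have ht3 : 3 ≤ t := by
            rcases ho with ⟨u, hu⟩; omega
          have hq1 : Q t = (r t, 𝒞 (t-1)) := hQodd t ht3 ht2' ho
          have hq2 : Q (t+1) = (r t, 𝒞 (t+1)) := by
            rcases eq_or_lt_of_le ht2' with h3 | h3
            · subst h3; rw [hQl1, hend]
            · have := hQeven (t+1) (by omega) h3 (Odd.add_one ho)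
              rwa [Nat.add_sub_cancel] at this
          have hev1 : ¬ Odd (t-1) := by
            rcases ho with ⟨u, hu⟩
            rw [Nat.not_odd_iff_even]
            exact ⟨u, by omega⟩
          have ha : 1 ≤ t - 1 := by omega
          have hb : t - 1 ≤ l := by omega
          have hFa : F (t-1) = Trow R (𝒞 (t-1)) (r t) := by
            simp [hF, ha, hb, hev1, htc]
          have hFb : F t = Tcol C (r t) (𝒞 (t+1)) := by
            simp [hF, ht1, ht2', ho]
          rw [hq1, hq2, hFa, hFb]
          ring
  calc (∑ t ∈ Finset.Ico 1 (l + 2),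
        (Tcol C (Q t).1 (Q (t+1)).2 + Trow R (Q t).2 (Q (t+1)).1))
      = ∑ t ∈ Finset.Ico 1 (l+2), (F (t-1) + F t) := by
        refine Finset.sum_congr rfl fun t ht => ?_
        simp only [Finset.mem_Ico] at ht
        exact key t ht.1 (Nat.lt_succ_iff.mp ht.2)
    _ = (∑ t ∈ Finset.Ico 1 (l+2), F (t-1)) + ∑ t ∈ Finset.Ico 1 (l+2), F t :=
        Finset.sum_add_distrib
    _ = 2 * costP := by
        have e1 : (∑ t ∈ Finset.Ico 1 (l+2), F (t-1)) = costP := by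
          rw [Finset.sum_Ico_eq_sum_range]
          simp only [Nat.add_sub_cancel_left, show l + 2 - 1 = l + 1 from rfl]
          rw [Finset.sum_range_succ']
          have : F 0 = 0 := by simp [hF]
          rw [this, add_zero, hcost2, Finset.sum_Ico_eq_sum_range]
          simp [Nat.add_comm]
        have e2 : (∑ t ∈ Finset.Ico 1 (l+2), F t) = costP := by
          rw [show l + 2 = (l+1) + 1 from rfl, Finset.sum_Ico_succ_top (by omega)]
          have : F (l+1) = 0 := by simp [hF]
          rw [this, add_zero, hcost2]
        rw [e1, e2]; ring
end

section
/- Let (r(1),𝒞(1)) and (r*,𝒞*) be equilibria. Then the minimum total cost of a transformation path from (r(1),𝒞(1)) to (r*,𝒞*) equals exactly two times the minimum cost of an alternating path whose first vertex is r(1) or 𝒞(1) and whose last vertex is r* or 𝒞*. -/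
open Finset

/-- Total cost of the transformation path `P 0, P 1, …, P L`. -/
noncomputable def pathCost {m n k : ℕ} [NeZero m] [NeZero n] (R C : Fin m → Fin n → ℝ)
    (P : ℕ → Fin m × (Fin k → Fin n)) (L : ℕ) : ℝ :=
  ∑ t ∈ Finset.range L, (Tcol C (P t).1 (P (t+1)).2 + Trow R (P t).2 (P (t+1)).1)

/-- The set of total costs of transformation paths from profile `a` to profile `b`. -/
noncomputable def transCosts {m n k : ℕ} [NeZero m] [NeZero n] (R C : Fin m → Fin n → ℝ)
    (a b : Fin m × (Fin k → Fin n)) : Set ℝ :=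
  {x | ∃ (L : ℕ) (P : ℕ → Fin m × (Fin k → Fin n)),
    P 0 = a ∧ P L = b ∧ x = pathCost R C P L}

/-- A vertex of an alternating path: a row strategy or a column profile. -/
abbrev AltVert (m n k : ℕ) := Fin m ⊕ (Fin k → Fin n)

/-- Weight of a step of an alternating path. -/
noncomputable def altWeight {m n k : ℕ} [NeZero m] [NeZero n] (R C : Fin m → Fin n → ℝ) :
    AltVert m n k → AltVert m n k → ℝ
  | Sum.inl r, Sum.inr c => Tcol C r c
  | Sum.inr c, Sum.inl r => Trow R c r
  | _, _ => 0

/-- `v 0, v 1, …, v L` is an alternating path: row strategies and column profiles alternate. -/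
def IsAlt {m n k : ℕ} (v : ℕ → AltVert m n k) (L : ℕ) : Prop :=
  ∀ t < L, (v t).isLeft ≠ (v (t+1)).isLeft

/-- Cost of the alternating path `v 0, v 1, …, v L`. -/
noncomputable def altCost {m n k : ℕ} [NeZero m] [NeZero n] (R C : Fin m → Fin n → ℝ)
    (v : ℕ → AltVert m n k) (L : ℕ) : ℝ :=
  ∑ t ∈ Finset.range L, altWeight R C (v t) (v (t+1))

set_option linter.unusedSectionVars false

section Aux
variable {m n k : ℕ} [NeZero m] [NeZero n] (R C : Fin m → Fin n → ℝ)

lemma Trow_nonneg' (𝒞 : Fin k → Fin n) (i' : Fin m) : 0 ≤ Trow R 𝒞 i' := by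
  have := Finset.le_sup' (fun i => ∑ j, R i (𝒞 j)) (Finset.mem_univ i')
  simp only [Trow, sub_nonneg]; exact this

lemma Tcol_nonneg' (i : Fin m) (𝒞' : Fin k → Fin n) : 0 ≤ Tcol C i 𝒞' := by
  have h : ∑ j, C i (𝒞' j) ≤ ∑ _j : Fin k, univ.sup' univ_nonempty (fun q => C i q) :=
    Finset.sum_le_sum fun j _ => Finset.le_sup' _ (Finset.mem_univ _)
  have h2 : (∑ _j : Fin k, univ.sup' univ_nonempty (fun q => C i q))
      = (k : ℝ) * univ.sup' univ_nonempty (fun q => C i q) := by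
    simp [Finset.sum_const, nsmul_eq_mul]
  exact sub_nonneg.2 (h.trans_eq h2)

lemma altWeight_nonneg' (a b : AltVert m n k) : 0 ≤ altWeight R C a b := by
  rcases a with r | c <;> rcases b with r' | c' <;>
    simp [altWeight, Trow_nonneg', Tcol_nonneg']

lemma altCost_nonneg' (v : ℕ → AltVert m n k) (L : ℕ) : 0 ≤ altCost R C v L :=
  Finset.sum_nonneg fun _ _ => altWeight_nonneg' R C _ _

lemma altCost_congr' {v w : ℕ → AltVert m n k} {L : ℕ} (h : ∀ u ≤ L, v u = w u) :
    altCost R C v L = altCost R C w L :=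
  Finset.sum_congr rfl fun u hu => by
    have := Finset.mem_range.1 hu
    rw [h u (by omega), h (u+1) (by omega)]

end Aux
section Short
variable {m n k : ℕ} [NeZero m] [NeZero n] (R C : Fin m → Fin n → ℝ)
  (r1 rstar : Fin m) (C1 Cstar : Fin k → Fin n)

lemma shortcut' : ∀ L (v : ℕ → AltVert m n k), IsAlt v L →
    (v 0 = Sum.inl r1 ∨ v 0 = Sum.inr C1) →
    (v L = Sum.inl rstar ∨ v L = Sum.inr Cstar) →
    ∃ L' < Fintype.card (AltVert m n k), ∃ v' : ℕ → AltVert m n k,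
      IsAlt v' L' ∧ (v' 0 = Sum.inl r1 ∨ v' 0 = Sum.inr C1) ∧
      (v' L' = Sum.inl rstar ∨ v' L' = Sum.inr Cstar) ∧
      altCost R C v' L' ≤ altCost R C v L := by
  intro L
  induction L using Nat.strong_induction_on with
  | _ L IH =>
    intro v hAlt hstart hend
    by_cases hL : L < Fintype.card (AltVert m n k)
    · exact ⟨L, hL, v, hAlt, hstart, hend, le_refl _⟩
    · push_neg at hL
      have hcard : Fintype.card (AltVert m n k) < Fintype.card (Fin (L+1)) := by
        simpa using Nat.lt_succ_of_le hL
      obtain ⟨x, y, hxy, heq⟩ :=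
        Fintype.exists_ne_map_eq_of_card_lt (fun i : Fin (L+1) => v i) hcard
      obtain ⟨s, t, hst, htL, hveq⟩ : ∃ s t : ℕ, s < t ∧ t ≤ L ∧ v s = v t := by
        rcases lt_or_gt_of_ne (fun h => hxy (Fin.ext (by exact_mod_cast congrArg Fin.val h))) with h | h
        · exact ⟨x, y, by exact_mod_cast h, by omega, heq⟩
        · exact ⟨y, x, by exact_mod_cast h, by omega, heq.symm⟩
      set d := t - s with hd
      have hd1 : 1 ≤ d := by omega
      have hdL : d ≤ L := by omega
      set L2 := L - d with hL2def
      have hL2 : L2 + d = L := by omega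
      set v2 : ℕ → AltVert m n k := fun u => if u ≤ s then v u else v (u + d) with hv2
      have hv2a : ∀ u, u ≤ s → v2 u = v u := fun u hu => if_pos hu
      have hv2b : ∀ u, s < u → v2 u = v (u + d) := fun u hu => if_neg (by omega)
      have hts : s + d = t := by omega
      have hkey : ∀ u < L2, ∃ u', ((u < s → u' = u) ∧ (¬ u < s → u' = u + d)) ∧ u' < L ∧
          v2 u = v u' ∧ v2 (u+1) = v (u'+1) := by
        intro u hu
        rcases lt_trichotomy u s with h | h | h
        · exact ⟨u, ⟨fun _ => rfl, fun h' => absurd h h'⟩, by omega,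
            hv2a u (le_of_lt h), hv2a (u+1) h⟩
        · subst h
          refine ⟨t, ⟨fun h' => absurd h' (lt_irrefl u), fun _ => by omega⟩, by omega,
            (hv2a u le_rfl).trans hveq, ?_⟩
          rw [hv2b (u+1) (by omega)]
          congr 1; omega
        · refine ⟨u + d, ⟨fun h' => absurd h' (by omega), fun _ => rfl⟩, by omega,
            hv2b u h, ?_⟩
          rw [hv2b (u+1) (by omega)]
          congr 1; omega
      have hAlt2 : IsAlt v2 L2 := by
        intro u hu
        obtain ⟨u', _, hu'L, e1, e2⟩ := hkey u hu
        rw [e1, e2]; exact hAlt u' hu'L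
      have hstart2 : v2 0 = Sum.inl r1 ∨ v2 0 = Sum.inr C1 := by
        rw [hv2a 0 (by omega)]; exact hstart
      have hend2 : v2 L2 = Sum.inl rstar ∨ v2 L2 = Sum.inr Cstar := by
        have : v2 L2 = v L := by
          by_cases h : L2 ≤ s
          · have hts' : t = L := by omega
            have hL2s : L2 = s := by omega
            rw [hv2a L2 h, hL2s, hveq, hts']
          · rw [hv2b L2 (by omega), show L2 + d = L by omega]
        rw [this]; exact hend
      have hcost2 : altCost R C v2 L2 ≤ altCost R C v L := by
        set g : ℕ → ℕ := fun u => if u < s then u else u + d with hg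
        have hginj : Set.InjOn g (Finset.range L2) := by
          intro a ha b hb hab
          simp only [hg] at hab
          split_ifs at hab <;> omega
        calc altCost R C v2 L2
            = ∑ u ∈ Finset.range L2, altWeight R C (v (g u)) (v (g u + 1)) := by
              refine Finset.sum_congr rfl fun u hu => ?_
              obtain ⟨u', ⟨ha, hb⟩, _, e1, e2⟩ := hkey u (Finset.mem_range.1 hu)
              have hgu : g u = u' := by
                simp only [hg]; split_ifs with h
                · exact (ha h).symm
                · exact (hb h).symm
              rw [e1, e2, hgu]
          _ = ∑ u ∈ (Finset.range L2).image g, altWeight R C (v u) (v (u + 1)) :=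
              (Finset.sum_image (f := fun u => altWeight R C (v u) (v (u + 1))) (fun a ha b hb hab => hginj ha hb hab)).symm
          _ ≤ ∑ u ∈ Finset.range L, altWeight R C (v u) (v (u + 1)) := by
              refine Finset.sum_le_sum_of_subset_of_nonneg ?_
                (fun _ _ _ => altWeight_nonneg' R C _ _)
              intro a ha
              obtain ⟨b, hb, rfl⟩ := Finset.mem_image.1 ha
              have hbL2 := Finset.mem_range.1 hb
              simp only [hg]
              split_ifs
              · exact Finset.mem_range.2 (by omega)
              · exact Finset.mem_range.2 (by omega)
          _ = altCost R C v L := rfl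
      obtain ⟨L', hL', v', h1, h2, h3, h4⟩ := IH L2 (by omega) v2 hAlt2 hstart2 hend2
      exact ⟨L', hL', v', h1, h2, h3, h4.trans hcost2⟩

end Short
section Constr
variable {m n k : ℕ} [NeZero m] [NeZero n] (R C : Fin m → Fin n → ℝ)
  (r1 rstar : Fin m) (C1 Cstar : Fin k → Fin n)

lemma construct' (hinit : IsEquilibrium R C r1 C1) (htarget : IsEquilibrium R C rstar Cstar)
    (L : ℕ) (v : ℕ → AltVert m n k) (hAlt : IsAlt v L)
    (hstart : v 0 = Sum.inl r1 ∨ v 0 = Sum.inr C1)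
    (hend : v L = Sum.inl rstar ∨ v L = Sum.inr Cstar) :
    ∃ P : ℕ → Fin m × (Fin k → Fin n), P 0 = (r1, C1) ∧ P (L+1) = (rstar, Cstar) ∧
      pathCost R C P (L+1) = 2 * altCost R C v L := by
  rcases Nat.eq_zero_or_pos L with hL0 | hLpos
  · subst hL0
    refine ⟨fun t => if t = 0 then (r1, C1) else (rstar, Cstar), by simp, by simp, ?_⟩
    have hzero : Tcol C r1 Cstar + Trow R C1 rstar = 0 := by
      rcases hstart with h0 | h0 <;> rcases hend with h1 | h1 <;> rw [h0] at h1
      · obtain rfl := Sum.inl.inj h1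
        rw [hinit.1, htarget.2]; ring
      · exact absurd h1 (by simp)
      · exact absurd h1 (by simp)
      · obtain rfl := Sum.inr.inj h1
        rw [hinit.2, htarget.1]; ring
    have hpc : pathCost R C (fun t => if t = 0 then (r1, C1) else (rstar, Cstar)) 1
        = Tcol C r1 Cstar + Trow R C1 rstar := by
      simp [pathCost]
    rw [hpc, hzero, altCost]; simp
  · -- L ≥ 1
    set rget : AltVert m n k → AltVert m n k → Fin m :=
      fun a b => Sum.elim id (fun _ => Sum.elim id (fun _ => r1) a) b with hrget
    set cget : AltVert m n k → AltVert m n k → (Fin k → Fin n) :=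
      fun a b => Sum.elim (fun _ => Sum.elim (fun _ => C1) id a) id b with hcget
    set P : ℕ → Fin m × (Fin k → Fin n) := fun t =>
      if t = 0 then (r1, C1) else if t ≤ L then (rget (v (t-1)) (v t), cget (v (t-1)) (v t))
      else (rstar, Cstar) with hP
    have hP0 : P 0 = (r1, C1) := rfl
    have hPmid : ∀ t : ℕ, t + 1 ≤ L → P (t+1) = (rget (v t) (v (t+1)), cget (v t) (v (t+1))) := by
      intro t ht
      show (if t + 1 = 0 then _ else if t + 1 ≤ L then _ else _) = _
      rw [if_neg (Nat.succ_ne_zero t), if_pos ht]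
      simp
    have hPend : ∀ t : ℕ, L < t → P t = (rstar, Cstar) := by
      intro t ht
      show (if t = 0 then _ else if t ≤ L then _ else _) = _
      rw [if_neg (by omega), if_neg (by omega)]
    set W : ℕ → ℝ := fun t => altWeight R C (v t) (v (t+1)) with hW
    have hnextR : ∀ t < L, ∀ r : Fin m, v t = Sum.inl r → ∃ c, v (t+1) = Sum.inr c := by
      intro t ht r hr
      have h1 := hAlt t ht
      rw [hr] at h1
      cases hv : v (t+1) with
      | inl r' => rw [hv] at h1; simp at h1
      | inr c' => exact ⟨c', rfl⟩
    have hnextC : ∀ t < L, ∀ c : Fin k → Fin n, v t = Sum.inr c → ∃ r, v (t+1) = Sum.inl r := by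
      intro t ht c hc
      have h1 := hAlt t ht
      rw [hc] at h1
      cases hv : v (t+1) with
      | inl r' => exact ⟨r', rfl⟩
      | inr c' => rw [hv] at h1; simp at h1
    have hprevR : ∀ t < L, ∀ r : Fin m, v (t+1) = Sum.inl r → ∃ c, v t = Sum.inr c := by
      intro t ht r hr
      have h1 := hAlt t ht
      rw [hr] at h1
      cases hv : v t with
      | inl r' => rw [hv] at h1; simp at h1
      | inr c' => exact ⟨c', rfl⟩
    have hprevC : ∀ t < L, ∀ c : Fin k → Fin n, v (t+1) = Sum.inr c → ∃ r, v t = Sum.inl r := by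
      intro t ht c hc
      have h1 := hAlt t ht
      rw [hc] at h1
      cases hv : v t with
      | inl r' => exact ⟨r', rfl⟩
      | inr c' => rw [hv] at h1; simp at h1
    have hstep : ∀ t ≤ L, Tcol C (P t).1 (P (t+1)).2 + Trow R (P t).2 (P (t+1)).1
        = (if t = 0 then 0 else W (t-1)) + (if t = L then 0 else W t) := by
      intro t ht
      cases t with
      | zero =>
        rw [hP0, hPmid 0 hLpos, if_pos rfl, if_neg (by omega)]
        rcases hstart with h0 | h0
        · obtain ⟨c, hc⟩ := hnextR 0 hLpos r1 h0
          rw [h0, hc]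
          simp only [hW, h0, hc, hrget, hcget, altWeight, Sum.elim_inl, Sum.elim_inr, id_eq]
          rw [hinit.1]
          ring
        · obtain ⟨r, hr⟩ := hnextC 0 hLpos C1 h0
          rw [h0, hr]
          simp only [hW, h0, hr, hrget, hcget, altWeight, Sum.elim_inl, Sum.elim_inr, id_eq]
          rw [hinit.2]
      | succ t' =>
        have ht' : t' < L := by omega
        rw [if_neg (Nat.succ_ne_zero t'), Nat.add_sub_cancel]
        rcases Nat.lt_or_ge (t'+1) L with hmid | hlast
        · rw [if_neg (by omega), hPmid t' ht, hPmid (t'+1) hmid]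
          cases hv : v (t'+1) with
          | inl r =>
            obtain ⟨c0, hc0⟩ := hprevR t' ht' r hv
            obtain ⟨c1, hc1⟩ := hnextR (t'+1) hmid r hv
            rw [hc0, hc1]
            simp only [hW, hv, hc0, hc1, hrget, hcget, altWeight, Sum.elim_inl, Sum.elim_inr,
              id_eq]
            ring
          | inr c =>
            obtain ⟨r0, hr0⟩ := hprevC t' ht' c hv
            obtain ⟨r1', hr1'⟩ := hnextC (t'+1) hmid c hv
            rw [hr0, hr1']
            simp only [hW, hv, hr0, hr1', hrget, hcget, altWeight, Sum.elim_inl, Sum.elim_inr,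
              id_eq]
        · have hteq : t' + 1 = L := by omega
          rw [if_pos hteq, hPmid t' ht, hPend (t'+1+1) (by omega)]
          have hendv : v (t'+1) = Sum.inl rstar ∨ v (t'+1) = Sum.inr Cstar := by
            rw [hteq]; exact hend
          rcases hendv with h1 | h1
          · obtain ⟨c0, hc0⟩ := hprevR t' ht' rstar h1
            rw [h1, hc0]
            simp only [hW, h1, hc0, hrget, hcget, altWeight, Sum.elim_inl, Sum.elim_inr, id_eq]
            rw [htarget.2]
            ring
          · obtain ⟨r0, hr0⟩ := hprevC t' ht' Cstar h1
            rw [h1, hr0]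
            simp only [hW, h1, hr0, hrget, hcget, altWeight, Sum.elim_inl, Sum.elim_inr, id_eq]
            rw [htarget.1]
    refine ⟨P, hP0, hPend (L+1) (by omega), ?_⟩
    have hsum : pathCost R C P (L+1)
        = ∑ t ∈ Finset.range (L+1), ((if t = 0 then 0 else W (t-1)) + (if t = L then 0 else W t)) := by
      refine Finset.sum_congr rfl fun t htmem => ?_
      exact hstep t (by have := Finset.mem_range.1 htmem; omega)
    rw [hsum, Finset.sum_add_distrib]
    have h1 : ∑ t ∈ Finset.range (L+1), (if t = 0 then (0:ℝ) else W (t-1))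
        = ∑ t ∈ Finset.range L, W t := by
      rw [Finset.sum_range_succ']
      simp
    have h2 : ∑ t ∈ Finset.range (L+1), (if t = L then (0:ℝ) else W t)
        = ∑ t ∈ Finset.range L, W t := by
      rw [Finset.sum_range_succ, if_pos rfl, add_zero]
      refine Finset.sum_congr rfl fun t htmem => ?_
      rw [if_neg (by have := Finset.mem_range.1 htmem; omega)]
    rw [h1, h2, altCost]
    ring

end Constr
section Decomp
variable {m n k : ℕ} [NeZero m] [NeZero n] (R C : Fin m → Fin n → ℝ)

lemma decomp' (P : ℕ → Fin m × (Fin k → Fin n)) (L : ℕ) :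
    ∃ v1 v2 : ℕ → AltVert m n k,
      IsAlt v1 L ∧ IsAlt v2 L ∧
      v1 0 = Sum.inl (P 0).1 ∧ v2 0 = Sum.inr (P 0).2 ∧
      (v1 L = Sum.inl (P L).1 ∨ v1 L = Sum.inr (P L).2) ∧
      (v2 L = Sum.inl (P L).1 ∨ v2 L = Sum.inr (P L).2) ∧
      pathCost R C P L = altCost R C v1 L + altCost R C v2 L := by
  classical
  set v1 : ℕ → AltVert m n k :=
    fun u => if Even u then Sum.inl (P u).1 else Sum.inr (P u).2 with hv1
  set v2 : ℕ → AltVert m n k :=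
    fun u => if Even u then Sum.inr (P u).2 else Sum.inl (P u).1 with hv2
  have h1 : IsAlt v1 L := by
    intro t ht
    rcases Nat.even_or_odd t with h | h
    · simp [hv1, h, Nat.even_add_one]
    · have h' : ¬ Even t := Nat.not_even_iff_odd.mpr h
      simp [hv1, h', Nat.even_add_one]
  have h2 : IsAlt v2 L := by
    intro t ht
    rcases Nat.even_or_odd t with h | h
    · simp [hv2, h, Nat.even_add_one]
    · have h' : ¬ Even t := Nat.not_even_iff_odd.mpr h
      simp [hv2, h', Nat.even_add_one]
  refine ⟨v1, v2, h1, h2, by simp [hv1], by simp [hv2], ?_, ?_, ?_⟩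
  · by_cases h : Even L
    · left; simp [hv1, h]
    · right; simp [hv1, h]
  · by_cases h : Even L
    · right; simp [hv2, h]
    · left; simp [hv2, h]
  · rw [altCost, altCost, ← Finset.sum_add_distrib, pathCost]
    refine Finset.sum_congr rfl fun t _ => ?_
    rcases Nat.even_or_odd t with h | h
    · have h' : ¬ Even (t+1) := by simp [Nat.even_add_one, h]
      simp only [hv1, hv2, if_pos h, if_neg h', Nat.even_add_one, altWeight]
    · have h0 : ¬ Even t := Nat.not_even_iff_odd.mpr h
      have h' : Even (t+1) := by simpa [Nat.even_add_one] using h0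
      simp only [hv1, hv2, if_neg h0, if_pos h', altWeight]
      ring_nf

end Decomp

/-- Given equilibria `(r(1),𝒞(1))` and `(r*,𝒞*)`, the minimum total cost of a transformation
path from `(r(1),𝒞(1))` to `(r*,𝒞*)` is exactly two times the minimum cost of an alternating
path whose first vertex is `r(1)` or `𝒞(1)` and whose last vertex is `r*` or `𝒞*`. -/
theorem optimal_transformation_cost_eq_twice_optimal_alternating_cost
    (m n k : ℕ) [NeZero m] [NeZero n]
    (R C : Fin m → Fin n → ℝ)
    (r1 rstar : Fin m) (C1 Cstar : Fin k → Fin n)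
    (hinit : IsEquilibrium R C r1 C1)
    (htarget : IsEquilibrium R C rstar Cstar) :
    ∃ a b : ℝ,
      IsLeast (transCosts R C (r1, C1) (rstar, Cstar)) a ∧
      IsLeast {x | ∃ (L : ℕ) (v : ℕ → AltVert m n k),
        IsAlt v L ∧
        (v 0 = Sum.inl r1 ∨ v 0 = Sum.inr C1) ∧
        (v L = Sum.inl rstar ∨ v L = Sum.inr Cstar) ∧
        x = altCost R C v L} b ∧
      a = 2 * b := by
  classical
  set N := Fintype.card (AltVert m n k) with hN
  have hN2 : 2 ≤ N := by
    have h1 : 0 < Fintype.card (Fin m) :=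
      Fintype.card_pos_iff.mpr ⟨⟨0, Nat.pos_of_ne_zero (NeZero.ne m)⟩⟩
    have h2 : 0 < Fintype.card (Fin k → Fin n) :=
      Fintype.card_pos_iff.mpr ⟨fun _ => ⟨0, Nat.pos_of_ne_zero (NeZero.ne n)⟩⟩
    rw [hN, Fintype.card_sum]
    omega
  set altSet : Set ℝ := {x | ∃ (L : ℕ) (v : ℕ → AltVert m n k),
    IsAlt v L ∧ (v 0 = Sum.inl r1 ∨ v 0 = Sum.inr C1) ∧
    (v L = Sum.inl rstar ∨ v L = Sum.inr Cstar) ∧ x = altCost R C v L} with haltSet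
  set shortSet : Set ℝ := {x | ∃ L < N, ∃ v : ℕ → AltVert m n k,
    IsAlt v L ∧ (v 0 = Sum.inl r1 ∨ v 0 = Sum.inr C1) ∧
    (v L = Sum.inl rstar ∨ v L = Sum.inr Cstar) ∧ x = altCost R C v L} with hshortSet
  have hsub : shortSet ⊆ altSet := by
    rintro x ⟨L, _, v, hv⟩
    exact ⟨L, v, hv⟩
  have hfin : shortSet.Finite := by
    have hs : shortSet ⊆ ⋃ L ∈ Set.Iio N, Set.range
        (fun f : Fin (L+1) → AltVert m n k =>
          altCost R C (fun u => f ⟨min u L, Nat.lt_succ_of_le (min_le_right u L)⟩) L) := by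
      rintro x ⟨L, hL, v, _, _, _, rfl⟩
      refine Set.mem_biUnion hL ?_
      refine ⟨fun i => v i, ?_⟩
      refine altCost_congr' R C fun u hu => ?_
      simp [min_eq_left hu]
    exact Set.Finite.subset (Set.Finite.biUnion (Set.finite_Iio N)
      fun L _ => Set.finite_range _) hs
  have hne : altCost R C (fun u => if u = 0 then Sum.inl r1 else Sum.inr Cstar) 1 ∈ shortSet := by
    refine ⟨1, by omega, _, ?_, ?_, ?_, rfl⟩
    · intro t ht
      have : t = 0 := by omega
      subst this
      simp
    · left; simp
    · right; simp
  have hne' : hfin.toFinset.Nonempty := by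
    rw [Set.Finite.toFinset_nonempty]
    exact ⟨_, hne⟩
  set b := hfin.toFinset.min' hne' with hb
  have hbmem : b ∈ shortSet := by
    have := hfin.toFinset.min'_mem hne'
    rwa [Set.Finite.mem_toFinset] at this
  have hble : ∀ x ∈ shortSet, b ≤ x := fun x hx =>
    hfin.toFinset.min'_le x (hfin.mem_toFinset.2 hx)
  -- b is a lower bound for altSet
  have hblb : ∀ x ∈ altSet, b ≤ x := by
    rintro x ⟨L, v, halt, hst, hed, rfl⟩
    obtain ⟨L', hL', v', h1, h2, h3, h4⟩ := shortcut' R C r1 rstar C1 Cstar L v halt hst hed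
    exact (hble _ ⟨L', hL', v', h1, h2, h3, rfl⟩).trans h4
  have hbleast : IsLeast altSet b := ⟨hsub hbmem, hblb⟩
  refine ⟨2 * b, b, ⟨?_, ?_⟩, hbleast, rfl⟩
  · -- 2b is attained by a transformation path
    obtain ⟨L, hL, v, halt, hst, hed, hx⟩ := hbmem
    obtain ⟨P, hP0, hPL, hcost⟩ :=
      construct' R C r1 rstar C1 Cstar hinit htarget L v halt hst hed
    exact ⟨L + 1, P, hP0, hPL, by rw [hcost, hx]⟩
  · -- 2b is a lower bound for transformation costs
    rintro x ⟨L, P, hP0, hPL, rfl⟩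
    obtain ⟨v1, v2, h1, h2, h10, h20, h1L, h2L, hsum⟩ := decomp' R C P L
    have hm1 : altCost R C v1 L ∈ altSet := by
      refine ⟨L, v1, h1, Or.inl (by rw [h10, hP0]), ?_, rfl⟩
      rw [hPL] at h1L
      exact h1L
    have hm2 : altCost R C v2 L ∈ altSet := by
      refine ⟨L, v2, h2, Or.inr (by rw [h20, hP0]), ?_, rfl⟩
      rw [hPL] at h2L
      exact h2L
    have := hblb _ hm1
    have := hblb _ hm2
    rw [hsum]
    linarith
end

section
/- For all row strategies i, j ∈ Fin m and every column profile 𝒞 : Fin k → Fin n, the cost of the length-2 alternating path r^i → 𝒞 → r^j satisfies T_{r^i}(𝒞) + T_𝒞(r^j) ≥ w*_{ij}, where w*_{ij} is the minimum over z ∈ Fin m of the optimal value of the linear program LP_z(i,j). Equivalently, the fractional relaxation w*_{ij} is a lower bound on the minimum cost of any two-step alternating path from r^i to r^j. -/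
open Finset

/-- Feasibility for the linear program `LP_z`: `x ≥ 0`, `∑_q x_q = k`, and `z` is a best row
response against the fractional column profile `x`. -/
def LPfeasible {m n : ℕ} (R : Fin m → Fin n → ℝ) (k : ℕ) (z : Fin m) (x : Fin n → ℝ) : Prop :=
  (∀ q, 0 ≤ x q) ∧ (∑ q, x q = (k : ℝ)) ∧
  (∀ z' : Fin m, ∑ q, x q * R z' q ≤ ∑ q, x q * R z q)

/-- Objective of the linear program `LP_z(i,j)`:
`[k·max_q C(i,q) − ∑_q x_q C(i,q)] + ∑_q x_q R(z,q) − ∑_q x_q R(j,q)`. -/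
noncomputable def LPobj {m n : ℕ} [NeZero n] (R C : Fin m → Fin n → ℝ) (k : ℕ)
    (i j z : Fin m) (x : Fin n → ℝ) : ℝ :=
  (k * (univ.sup' univ_nonempty fun q => C i q) - ∑ q, x q * C i q)
    + ∑ q, x q * R z q - ∑ q, x q * R j q

/-- The set of objective values attained by feasible solutions of the programs `LP_z(i,j)`,
`z ∈ Fin m`; its infimum is `w*_{ij} = min_z opt(LP_z(i,j))`. -/
noncomputable def wstarSet {m n : ℕ} [NeZero n] (R C : Fin m → Fin n → ℝ) (k : ℕ)
    (i j : Fin m) : Set ℝ :=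
  {y | ∃ (z : Fin m) (x : Fin n → ℝ), LPfeasible R k z x ∧ y = LPobj R C k i j z x}

lemma count_sum {n k : ℕ} (𝒞 : Fin k → Fin n) (f : Fin n → ℝ) :
    ∑ q, (∑ j, if 𝒞 j = q then (1:ℝ) else 0) * f q = ∑ j, f (𝒞 j) := by
  simp_rw [Finset.sum_mul, ite_mul, one_mul, zero_mul]
  rw [Finset.sum_comm]
  simp

/-- The fractional LP value `w*_{ij} = min_z opt(LP_z(i,j))` is a lower bound on the cost
`T_{r^i}(𝒞) + T_𝒞(r^j)` of any length-2 alternating path `r^i → 𝒞 → r^j`. -/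
theorem lp_value_le_two_step_alternating_cost
    (m n k : ℕ) [NeZero m] [NeZero n]
    (R C : Fin m → Fin n → ℝ)
    (i j : Fin m) (𝒞 : Fin k → Fin n) :
    sInf (wstarSet R C k i j) ≤ Tcol C i 𝒞 + Trow R 𝒞 j := by
  set x : Fin n → ℝ := fun q => ∑ j, if 𝒞 j = q then (1:ℝ) else 0 with hx
  obtain ⟨z, hzmem, hz⟩ := Finset.exists_mem_eq_sup' (univ_nonempty (α := Fin m))
    (fun i : Fin m => ∑ j : Fin k, R i (𝒞 j))
  have hxsum : ∀ f : Fin n → ℝ, ∑ q, x q * f q = ∑ j, f (𝒞 j) := fun f => count_sum 𝒞 f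
  have hfeas : LPfeasible R k z x := by
    refine ⟨fun q => Finset.sum_nonneg fun _ _ => by positivity, ?_, fun z' => ?_⟩
    · have := hxsum (fun _ => 1)
      simpa using this
    · rw [hxsum, hxsum, ← hz]
      exact Finset.le_sup' (fun i : Fin m => ∑ j' : Fin k, R i (𝒞 j')) (Finset.mem_univ z')
  have hobj : LPobj R C k i j z x = Tcol C i 𝒞 + Trow R 𝒞 j := by
    rw [LPobj, Tcol, Trow, hxsum, hxsum, hxsum, ← hz]
    ring
  have hmem : Tcol C i 𝒞 + Trow R 𝒞 j ∈ wstarSet R C k i j := ⟨z, x, hfeas, hobj.symm⟩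
  by_cases hbdd : BddBelow (wstarSet R C k i j)
  · exact csInf_le hbdd hmem
  · rw [Real.sInf_of_not_bddBelow hbdd]
    have h1 : 0 ≤ Tcol C i 𝒞 := by
      rw [Tcol]
      have : ∑ j' : Fin k, C i (𝒞 j') ≤ ∑ _j' : Fin k, (univ.sup' univ_nonempty fun q => C i q) :=
        Finset.sum_le_sum fun j' _ => Finset.le_sup' _ (Finset.mem_univ (𝒞 j'))
      simpa using this
    have h2 : 0 ≤ Trow R 𝒞 j := by
      rw [Trow]
      have := Finset.le_sup' (fun i => ∑ j', R i (𝒞 j')) (Finset.mem_univ j)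
      linarith
    linarith
end

section
/- Assume all entries of R and C are nonnegative. Fix row strategies i, j ∈ Fin m and z ∈ Fin m, and let x ∈ ℝ^n be an optimal solution of LP_z(i,j) achieving the minimum value w*_{ij} = min_z opt(LP_z(i,j)). Let u ∈ Fin n minimize q ↦ max_{p ∈ Fin m} R(p,q), and define the rounded integer vector x' by x'_q = ⌊x_q⌋ for q ≠ u and x'_u = ⌊x_u⌋ + (k − ∑_q ⌊x_q⌋). Let 𝒞_{ij} be any column profile in which exactly x'_q of the k column players play strategy q. Then the cost w_{ij} = T_{r^i}(𝒞_{ij}) + T_{𝒞_{ij}}(r^j) of the length-2 alternating path r^i → 𝒞_{ij} → r^j satisfies w_{ij} − w*_{ij} ≤ 2‖R‖_{1,1} + ‖C‖_{1,1}. -/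
open Finset

/-- Rounding an optimal fractional LP solution `x` (achieving `w*_{ij}`) to an integral column
profile `𝒞_{ij}` — taking `x'_q = ⌊x_q⌋` for `q ≠ u` and `x'_u = ⌊x_u⌋ + (k − ∑_q ⌊x_q⌋)` where
`u` minimizes `q ↦ max_p R(p,q)` — yields a length-2 alternating path `r^i → 𝒞_{ij} → r^j`
whose cost `w_{ij}` satisfies `w_{ij} − w*_{ij} ≤ 2‖R‖₁₁ + ‖C‖₁₁`. -/
theorem rounded_two_step_cost_sub_lp_value_le
    (m n k : ℕ) [NeZero m] [NeZero n]
    (R C : Fin m → Fin n → ℝ)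
    (hR : ∀ p q, 0 ≤ R p q) (hC : ∀ p q, 0 ≤ C p q)
    (i j z : Fin m) (x : Fin n → ℝ)
    (hfeas : LPfeasible R k z x)
    (hopt : IsLeast (wstarSet R C k i j) (LPobj R C k i j z x))
    (u : Fin n)
    (hu : ∀ q : Fin n, (univ.sup' univ_nonempty fun p => R p u) ≤
      univ.sup' univ_nonempty fun p => R p q)
    (x' : Fin n → ℤ)
    (hx' : ∀ q ≠ u, x' q = ⌊x q⌋)
    (hx'u : x' u = ⌊x u⌋ + ((k : ℤ) - ∑ q, ⌊x q⌋))
    (𝒞ij : Fin k → Fin n)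
    (hcount : ∀ q : Fin n, ((univ.filter fun j' => 𝒞ij j' = q).card : ℤ) = x' q) :
    (Tcol C i 𝒞ij + Trow R 𝒞ij j) - LPobj R C k i j z x ≤
      2 * (∑ p, ∑ q, R p q) + ∑ p, ∑ q, C p q := by

  classical
  obtain ⟨hpos, hsum, hbest⟩ := hfeas
  -- reindex sums over column players as weighted sums over strategies
  have hre : ∀ g : Fin n → ℝ, ∑ j', g (𝒞ij j') = ∑ q, (x' q : ℝ) * g q := by
    intro g
    rw [← Fintype.sum_fiberwise 𝒞ij (fun j' => g (𝒞ij j'))]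
    refine Finset.sum_congr rfl fun q _ => ?_
    rw [Finset.sum_congr rfl (fun (j' : {j' // 𝒞ij j' = q}) _ => by rw [j'.2]),
      Finset.sum_const, nsmul_eq_mul, Finset.card_univ, Fintype.card_subtype]
    congr 1
    exact_mod_cast hcount q
  have hTcol : Tcol C i 𝒞ij
      = k * (univ.sup' univ_nonempty fun q => C i q) - ∑ q, (x' q : ℝ) * C i q := by
    rw [Tcol, hre]
  have hTrow : Trow R 𝒞ij j
      = (univ.sup' univ_nonempty fun p => ∑ q, (x' q : ℝ) * R p q)
        - ∑ q, (x' q : ℝ) * R j q := by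
    rw [Trow, hre]
    congr 1
    exact Finset.sup'_congr _ rfl fun p _ => hre _
  -- basic facts about the rounding
  have hfloor_le : ∀ q, (⌊x q⌋ : ℝ) ≤ x q := fun q => Int.floor_le _
  have hfrac0 : ∀ q : Fin n, (0:ℝ) ≤ x q - ⌊x q⌋ := fun q => by
    have := hfloor_le q; linarith
  have hfrac1 : ∀ q : Fin n, x q - ⌊x q⌋ ≤ 1 := fun q => by
    have : x q < ⌊x q⌋ + 1 := Int.lt_floor_add_one _
    linarith
  have hxu : (x' u : ℝ) = (⌊x u⌋ : ℝ) + ((k:ℝ) - ∑ q, (⌊x q⌋ : ℝ)) := by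
    rw [hx'u]; push_cast; ring
  have hk : (k:ℝ) - ∑ q, (⌊x q⌋ : ℝ) = ∑ q, (x q - ⌊x q⌋) := by
    rw [Finset.sum_sub_distrib, hsum]
  have hxu_ge : x u ≤ (x' u : ℝ) := by
    have h1 : x u - ⌊x u⌋ ≤ ∑ q, (x q - ⌊x q⌋) :=
      Finset.single_le_sum (fun q _ => hfrac0 q) (mem_univ u)
    rw [hxu, hk]; linarith
  have hxu_diff : (x' u : ℝ) - x u = ∑ q ∈ univ.erase u, (x q - ⌊x q⌋) := by
    rw [hxu, hk, ← Finset.add_sum_erase _ _ (mem_univ u)]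
    ring
  have hx'le : ∀ q, q ≠ u → (x' q : ℝ) ≤ x q ∧ x q - (x' q : ℝ) ≤ 1 := by
    intro q hq
    rw [hx' q hq]
    exact ⟨hfloor_le q, hfrac1 q⟩
  set Sq : Fin n → ℝ := fun q => univ.sup' univ_nonempty fun p => R p q with hSq
  have hSq_nonneg : ∀ q, 0 ≤ Sq q := fun q => by
    obtain ⟨p⟩ := (inferInstance : Nonempty (Fin m))
    exact le_trans (hR p q) (Finset.le_sup' (fun p => R p q) (mem_univ p))
  have hSq_le : ∀ q, Sq q ≤ ∑ p, R p q := fun q =>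
    Finset.sup'_le _ _ fun p _ =>
      Finset.single_le_sum (fun p' _ => hR p' q) (mem_univ p)
  -- bound B2
  have B2 : (univ.sup' univ_nonempty fun p => ∑ q, (x' q : ℝ) * R p q)
      ≤ (∑ q, x q * R z q) + ∑ p, ∑ q, R p q := by
    refine Finset.sup'_le _ _ fun p _ => ?_
    have step1 : ∑ q, ((x' q : ℝ) - x q) * R p q ≤ ((x' u : ℝ) - x u) * R p u := by
      rw [← Finset.add_sum_erase _ (fun q => ((x' q : ℝ) - x q) * R p q) (mem_univ u)]
      have : ∑ q ∈ univ.erase u, ((x' q : ℝ) - x q) * R p q ≤ 0 := by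
        refine Finset.sum_nonpos fun q hq => ?_
        have hqu := (Finset.mem_erase.mp hq).1
        exact mul_nonpos_of_nonpos_of_nonneg (by linarith [(hx'le q hqu).1]) (hR p q)
      linarith
    have step2 : ((x' u : ℝ) - x u) * R p u ≤ ∑ q ∈ univ.erase u, Sq q := by
      rw [hxu_diff, Finset.sum_mul]
      refine Finset.sum_le_sum fun q _ => ?_
      have hRpu : R p u ≤ Sq q :=
        le_trans (Finset.le_sup' (fun p => R p u) (mem_univ p)) (hu q)
      calc (x q - ⌊x q⌋) * R p u ≤ 1 * R p u :=
            mul_le_mul_of_nonneg_right (hfrac1 q) (hR p u)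
        _ = R p u := one_mul _
        _ ≤ Sq q := hRpu
    have step3 : ∑ q ∈ univ.erase u, Sq q ≤ ∑ p, ∑ q, R p q := by
      calc ∑ q ∈ univ.erase u, Sq q ≤ ∑ q, Sq q :=
            Finset.sum_le_sum_of_subset_of_nonneg (Finset.erase_subset _ _)
              (fun q _ _ => hSq_nonneg q)
        _ ≤ ∑ q, ∑ p, R p q := Finset.sum_le_sum fun q _ => hSq_le q
        _ = ∑ p, ∑ q, R p q := Finset.sum_comm
    have step4 : ∑ q, x q * R p q ≤ ∑ q, x q * R z q := hbest p
    have hsplit : ∑ q, (x' q : ℝ) * R p q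
        = ∑ q, ((x' q : ℝ) - x q) * R p q + ∑ q, x q * R p q := by
      rw [← Finset.sum_add_distrib]
      exact Finset.sum_congr rfl fun q _ => by ring
    linarith
  -- generic bound for B1 and B3
  have hgen : ∀ g : Fin n → ℝ, (∀ q, 0 ≤ g q) →
      ∑ q, (x q - (x' q : ℝ)) * g q ≤ ∑ q, g q := by
    intro g hg
    refine Finset.sum_le_sum fun q _ => ?_
    by_cases hq : q = u
    · subst hq
      have h0 : x q - (x' q : ℝ) ≤ 0 := by linarith [hxu_ge]
      exact le_trans (mul_nonpos_of_nonpos_of_nonneg h0 (hg q)) (hg q)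
    · calc (x q - (x' q : ℝ)) * g q ≤ 1 * g q :=
          mul_le_mul_of_nonneg_right (hx'le q hq).2 (hg q)
        _ = g q := one_mul _
  have B1 : ∑ q, (x q - (x' q : ℝ)) * C i q ≤ ∑ p, ∑ q, C p q := by
    refine le_trans (hgen _ fun q => hC i q) ?_
    exact Finset.single_le_sum (f := fun p => ∑ q, C p q)
      (fun p _ => Finset.sum_nonneg fun q _ => hC p q) (mem_univ i)
  have B3 : ∑ q, (x q - (x' q : ℝ)) * R j q ≤ ∑ p, ∑ q, R p q := by
    refine le_trans (hgen _ fun q => hR j q) ?_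
    exact Finset.single_le_sum (f := fun p => ∑ q, R p q)
      (fun p _ => Finset.sum_nonneg fun q _ => hR p q) (mem_univ j)
  have e1 : ∑ q, (x q - (x' q : ℝ)) * C i q
      = ∑ q, x q * C i q - ∑ q, (x' q : ℝ) * C i q := by
    rw [← Finset.sum_sub_distrib]
    exact Finset.sum_congr rfl fun q _ => by ring
  have e3 : ∑ q, (x q - (x' q : ℝ)) * R j q
      = ∑ q, x q * R j q - ∑ q, (x' q : ℝ) * R j q := by
    rw [← Finset.sum_sub_distrib]
    exact Finset.sum_congr rfl fun q _ => by ring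
  rw [hTcol, hTrow, LPobj]
  rw [e1] at B1
  rw [e3] at B3
  linarith
end

section
/- In the game constructed from an EXACT COVER instance (with s column players, 3s+2 row strategies and w+2 column strategies), both the profile (r^1, c^1, …, c^1), where all players play their first strategy, and the profile (r^{3s+2}, c^{w+2}, …, c^{w+2}), where all players play their last strategy, are pure Nash equilibria: in each case the row strategy maximizes the row player's total payoff ∑_j R(i, 𝒞(j)) against the column profile, and every column player's strategy maximizes C(i, ·) against the row strategy. -/
open Finset

/-- The column players' payoff matrix of the game constructed from an EXACT COVER instance
(indices are 0-based: 0-based entry `(i,j)` is 1-based entry `(i+1,j+1)`). -/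
noncomputable def ECcol (s w : ℕ) : Fin (3*s+2) → Fin (w+2) → ℝ :=
  fun i j => if (i.val ≤ 3*s ∧ j.val ≤ w) ∨ (i.val = 3*s+1 ∧ j.val = w+1) then 1 else 0

/-- The row player's payoff matrix of the game constructed from an EXACT COVER instance with
subsets `X 1, …, X w ⊆ {1,…,3s}`; column `j` (for `1 ≤ j ≤ w`, 0-based) carries the
characteristic vector of `X j` (indices are 0-based). -/
noncomputable def ECrow (s w : ℕ) (X : ℕ → Finset ℕ) : Fin (3*s+2) → Fin (w+2) → ℝ :=
  fun i j =>
    if i.val = 0 then (if j.val = w+1 then -1 else 0)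
    else if i.val = 3*s+1 then
      (if j.val = 0 then -(s : ℝ) else if j.val = w+1 then 1 else 1/(s : ℝ))
    else
      if j.val = 0 ∨ j.val = w+1 then 0
      else if i.val ∈ X j.val then 1 else 0

/-- In the game constructed from an EXACT COVER instance, both the all-first-strategy profile
`(r^1, c^1, …, c^1)` and the all-last-strategy profile `(r^{3s+2}, c^{w+2}, …, c^{w+2})` are
pure Nash equilibria: the row strategy maximizes the row player's total payoff
`∑_j R(i, 𝒞(j))` against the column profile, and every column player's strategy maximizes
`C(i, ·)` against the row strategy. -/
theorem exact_cover_game_endpoints_are_equilibria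
    (s w : ℕ) (hs : 1 ≤ s) (hsw : s ≤ w)
    (X : ℕ → Finset ℕ)
    (hXsub : ∀ t, 1 ≤ t → t ≤ w → X t ⊆ Finset.Icc 1 (3*s))
    (hXcard : ∀ t, 1 ≤ t → t ≤ w → (X t).card = 3)
    (r₁ : Fin (3*s+2)) (c₁ : Fin (w+2)) (rLast : Fin (3*s+2)) (cLast : Fin (w+2))
    (hr₁ : r₁ = ⟨0, by omega⟩) (hc₁ : c₁ = ⟨0, by omega⟩)
    (hrLast : rLast = ⟨3*s+1, by omega⟩) (hcLast : cLast = ⟨w+1, by omega⟩) :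
    ((∀ i : Fin (3*s+2),
        ∑ j : Fin s, ECrow s w X i c₁ ≤ ∑ j : Fin s, ECrow s w X r₁ c₁) ∧
      (∀ q : Fin (w+2), ECcol s w r₁ q ≤ ECcol s w r₁ c₁)) ∧
    ((∀ i : Fin (3*s+2),
        ∑ j : Fin s, ECrow s w X i cLast ≤ ∑ j : Fin s, ECrow s w X rLast cLast) ∧
      (∀ q : Fin (w+2), ECcol s w rLast q ≤ ECcol s w rLast cLast)) := by
  subst hr₁ hc₁ hrLast hcLast
  have hs0 : (0:ℝ) ≤ s := by positivity
  refine ⟨⟨?_, ?_⟩, ?_, ?_⟩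
  · intro i
    refine Finset.sum_le_sum fun j _ => ?_
    unfold ECrow
    simp only
    split_ifs <;> simp_all <;> omega
  · intro q
    unfold ECcol
    split_ifs <;> simp_all <;> omega
  · intro i
    refine Finset.sum_le_sum fun j _ => ?_
    unfold ECrow
    simp only
    split_ifs <;> simp_all <;> omega
  · intro q
    unfold ECcol
    split_ifs <;> simp_all <;> omega
end

section
/- Let m, k be integers with 1 ≤ k ≤ m, and let v₁,…,v_m and w₁,…,w_m be reals with 0 ≤ v_i ≤ V and 0 ≤ w_i ≤ W for all i. Define v'_i = v_i + m(V+1), w'_i = w_i + (W+1), V' = V + k·m(V+1), and W' = W + k(W+1). Then for every finite multiset I of indices from {1,…,m}: ∑_{i ∈ I} v'_i ≥ V' and ∑_{i ∈ I} w'_i ≤ W' hold if and only if |I| = k, ∑_{i ∈ I} v_i ≥ V, and ∑_{i ∈ I} w_i ≤ W. In particular, any multiset satisfying the primed constraints contains exactly k items. -/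
/-- Correctness of the padding reduction from classical Knapsack to the exact-cardinality
variant: with `v'_i = v_i + m(V+1)`, `w'_i = w_i + (W+1)`, `V' = V + k·m(V+1)` and
`W' = W + k(W+1)`, a multiset `I` of indices satisfies the primed constraints iff it has
exactly `k` elements and satisfies the original constraints. -/
theorem knapsack_padding_reduction_correct
    (m k : ℕ) (hk : 1 ≤ k) (hkm : k ≤ m)
    (v w : Fin m → ℝ) (V W : ℝ)
    (hv : ∀ i, 0 ≤ v i ∧ v i ≤ V)
    (hw : ∀ i, 0 ≤ w i ∧ w i ≤ W)
    (v' w' : Fin m → ℝ) (V' W' : ℝ)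
    (hv' : ∀ i, v' i = v i + m * (V + 1))
    (hw' : ∀ i, w' i = w i + (W + 1))
    (hV' : V' = V + k * (m * (V + 1)))
    (hW' : W' = W + k * (W + 1))
    (I : Multiset (Fin m)) :
    (V' ≤ (I.map v').sum ∧ (I.map w').sum ≤ W') ↔
      (Multiset.card I = k ∧ V ≤ (I.map v).sum ∧ (I.map w).sum ≤ W) := by
  have hm : 1 ≤ m := le_trans hk hkm
  have i0 : Fin m := ⟨0, hm⟩
  have hV0 : 0 ≤ V := le_trans (hv i0).1 (hv i0).2
  have hW0 : 0 ≤ W := le_trans (hw i0).1 (hw i0).2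
  have hveq : (I.map v').sum = (I.map v).sum + (Multiset.card I : ℝ) * (m * (V + 1)) := by
    have h : I.map v' = I.map (fun i => v i + m * (V + 1)) :=
      Multiset.map_congr rfl (fun i _ => hv' i)
    rw [h, Multiset.sum_map_add]
    simp only [Multiset.map_const', Multiset.sum_replicate, nsmul_eq_mul]
  have hweq : (I.map w').sum = (I.map w).sum + (Multiset.card I : ℝ) * (W + 1) := by
    have h : I.map w' = I.map (fun i => w i + (W + 1)) :=
      Multiset.map_congr rfl (fun i _ => hw' i)
    rw [h, Multiset.sum_map_add]
    simp only [Multiset.map_const', Multiset.sum_replicate, nsmul_eq_mul]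
  have hSv0 : 0 ≤ (I.map v).sum := Multiset.sum_nonneg (by
    intro x hx; obtain ⟨i, _, rfl⟩ := Multiset.mem_map.1 hx; exact (hv i).1)
  have hSw0 : 0 ≤ (I.map w).sum := Multiset.sum_nonneg (by
    intro x hx; obtain ⟨i, _, rfl⟩ := Multiset.mem_map.1 hx; exact (hw i).1)
  have hSvle : (I.map v).sum ≤ (Multiset.card I : ℝ) * V := by
    have := Multiset.sum_le_card_nsmul (I.map v) V (by
      intro x hx; obtain ⟨i, _, rfl⟩ := Multiset.mem_map.1 hx; exact (hv i).2)
    simpa [Multiset.card_map, nsmul_eq_mul] using this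
  constructor
  · rintro ⟨h1, h2⟩
    rw [hveq, hV'] at h1
    rw [hweq, hW'] at h2
    have hnk : Multiset.card I ≤ k := by
      by_contra h
      push_neg at h
      have hc : (k : ℝ) + 1 ≤ (Multiset.card I : ℝ) := by exact_mod_cast h
      nlinarith [mul_nonneg (sub_nonneg.2 hc) (by linarith : (0:ℝ) ≤ W + 1)]
    have hkn : k ≤ Multiset.card I := by
      by_contra h
      push_neg at h
      have hc : (Multiset.card I : ℝ) + 1 ≤ (k : ℝ) := by exact_mod_cast h
      have hnm : (Multiset.card I : ℝ) ≤ (m : ℝ) := by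
        exact_mod_cast le_trans hnk hkm
      have hm1 : (1 : ℝ) ≤ (m : ℝ) := by exact_mod_cast hm
      nlinarith [mul_nonneg (sub_nonneg.2 (by linarith : (Multiset.card I : ℝ) + 1 ≤ (k:ℝ)))
        (by nlinarith : (0:ℝ) ≤ (m:ℝ) * (V + 1)),
        mul_le_mul_of_nonneg_right hnm hV0]
    have hcard : Multiset.card I = k := le_antisymm hnk hkn
    have hck : (Multiset.card I : ℝ) = (k : ℝ) := by exact_mod_cast hcard
    rw [hck] at h1 h2
    exact ⟨hcard, by linarith, by linarith⟩
  · rintro ⟨hcard, h1, h2⟩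
    have hck : (Multiset.card I : ℝ) = (k : ℝ) := by exact_mod_cast hcard
    rw [hveq, hweq, hck, hV', hW']
    exact ⟨by linarith, by linarith⟩
end

section
/- In the one-dimensional facility setting (common finite strategy set S ⊂ ℝ of locations, row payoff R(r,c) = −|r − c|, column payoff C(r,c) = g(|r − c|) with g antitone on [0,∞) and g(0) = 0), fix r^i, r^j ∈ S with r^i < r^j. Then there exists a column profile 𝒞 = (c¹,…,c^k) with entries in S that minimizes the length-2 alternating path cost T_{r^i}(𝒞) + T_𝒞(r^j) and satisfies r^i ≤ c^l ≤ r^j for every l = 1,…,k. Concretely, replacing every entry of a profile that lies strictly below r^i by r^i (respectively, strictly above r^j by r^j) does not increase the cost T_{r^i}(𝒞) + T_𝒞(r^j). -/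
open Finset

/-- In the one-dimensional facility setting, the reward needed to incentivize the row player
(whose payoff at `r` is `−∑_l |r − 𝒞 l|`) to move to location `r'` against column profile `𝒞`,
the row player choosing among the finite set `S` of locations. -/
noncomputable def TrowD (S : Finset ℝ) (hS : S.Nonempty) {k : ℕ}
    (𝒞 : Fin k → ℝ) (r' : ℝ) : ℝ :=
  (S.sup' hS fun r => -∑ l, |r - 𝒞 l|) - (-∑ l, |r' - 𝒞 l|)

/-- In the one-dimensional facility setting, the reward needed to incentivize the column
players (whose payoff is `g(|r − c|)`) to move to profile `𝒞` when the row plays `r`. -/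
noncomputable def TcolD (S : Finset ℝ) (hS : S.Nonempty) {k : ℕ}
    (g : ℝ → ℝ) (r : ℝ) (𝒞 : Fin k → ℝ) : ℝ :=
  k * (S.sup' hS fun c => g |r - c|) - ∑ l, g |r - 𝒞 l|

lemma key_entry (g : ℝ → ℝ) (hg : AntitoneOn g (Set.Ici 0)) (hg0 : g 0 = 0)
    (ri rj r c : ℝ) (hij : ri < rj) (h1 : ri ≤ r) (h2 : r ≤ rj) :
    -|r - (if c < ri then ri else if rj < c then rj else c)|
      + |rj - (if c < ri then ri else if rj < c then rj else c)|
      - g |ri - (if c < ri then ri else if rj < c then rj else c)| ≤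
    -|r - c| + |rj - c| - g |ri - c| := by
  split_ifs with h h'
  · have hg1 : g |ri - c| ≤ g 0 :=
      hg (Set.mem_Ici.mpr le_rfl) (Set.mem_Ici.mpr (abs_nonneg _)) (abs_nonneg _)
    rw [hg0] at hg1
    have e0 : |ri - ri| = 0 := by rw [sub_self, abs_zero]
    rw [e0, hg0, abs_of_nonneg (by linarith : (0:ℝ) ≤ r - ri),
      abs_of_nonneg (by linarith : (0:ℝ) ≤ rj - ri),
      abs_of_nonneg (by linarith : (0:ℝ) ≤ r - c),
      abs_of_nonneg (by linarith : (0:ℝ) ≤ rj - c)]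
    linarith
  · have e1 : |ri - rj| = rj - ri := by
      rw [abs_sub_comm]; exact abs_of_nonneg (by linarith)
    have e2 : |ri - c| = c - ri := by
      rw [abs_sub_comm]; exact abs_of_nonneg (by linarith)
    have hg1 : g |ri - c| ≤ g |ri - rj| := by
      rw [e1, e2]
      exact hg (Set.mem_Ici.mpr (by linarith)) (Set.mem_Ici.mpr (by linarith)) (by linarith)
    have e0 : |rj - rj| = 0 := by rw [sub_self, abs_zero]
    rw [e0, abs_of_nonpos (by linarith : r - rj ≤ 0),
      abs_of_nonpos (by linarith : r - c ≤ 0),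
      abs_of_nonpos (by linarith : rj - c ≤ 0)]
    linarith
  · exact le_rfl

lemma clamp_dist (ri rj r0 c : ℝ) (h1 : ri ≤ c) (h2 : c ≤ rj) :
    |(if r0 < ri then ri else if rj < r0 then rj else r0) - c| ≤ |r0 - c| := by
  split_ifs with h h'
  · rw [abs_of_nonpos (by linarith), abs_of_nonpos (by linarith)]; linarith
  · rw [abs_of_nonneg (by linarith), abs_of_nonneg (by linarith)]; linarith
  · exact le_rfl

lemma cost_clamp_le (S : Finset ℝ) (hS : S.Nonempty) (k : ℕ)
    (g : ℝ → ℝ) (hg : AntitoneOn g (Set.Ici 0)) (hg0 : g 0 = 0)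
    (ri rj : ℝ) (hri : ri ∈ S) (hrj : rj ∈ S) (hij : ri < rj)
    (𝒞 : Fin k → ℝ) :
    TcolD S hS g ri (fun l => if 𝒞 l < ri then ri else if rj < 𝒞 l then rj else 𝒞 l)
        + TrowD S hS (fun l => if 𝒞 l < ri then ri else if rj < 𝒞 l then rj else 𝒞 l) rj ≤
      TcolD S hS g ri 𝒞 + TrowD S hS 𝒞 rj := by
  set 𝒞' : Fin k → ℝ := fun l => if 𝒞 l < ri then ri else if rj < 𝒞 l then rj else 𝒞 l with h𝒞'
  have hbet : ∀ l, ri ≤ 𝒞' l ∧ 𝒞' l ≤ rj := by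
    intro l
    simp only [h𝒞']
    split_ifs with h h' <;> constructor <;> linarith
  obtain ⟨r0, hr0S, hr0⟩ := S.exists_mem_eq_sup' hS (fun r => -∑ l, |r - 𝒞' l|)
  set r' : ℝ := if r0 < ri then ri else if rj < r0 then rj else r0 with hr'
  have hr'S : r' ∈ S := by
    simp only [hr']; split_ifs <;> assumption
  have hr'1 : ri ≤ r' := by simp only [hr']; split_ifs <;> linarith
  have hr'2 : r' ≤ rj := by simp only [hr']; split_ifs <;> linarith
  -- the sup for the clamped profile is at most the value at r'
  have hsup1 : (S.sup' hS fun r => -∑ l, |r - 𝒞' l|) ≤ -∑ l, |r' - 𝒞' l| := by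
    rw [hr0]
    have : ∑ l, |r' - 𝒞' l| ≤ ∑ l, |r0 - 𝒞' l| :=
      Finset.sum_le_sum fun l _ => clamp_dist ri rj r0 (𝒞' l) (hbet l).1 (hbet l).2
    linarith
  have hsup2 : -∑ l, |r' - 𝒞 l| ≤ S.sup' hS fun r => -∑ l, |r - 𝒞 l| :=
    Finset.le_sup' (fun r => -∑ l, |r - 𝒞 l|) hr'S
  have hsum : ∑ l, (-|r' - 𝒞' l| + |rj - 𝒞' l| - g |ri - 𝒞' l|) ≤
      ∑ l, (-|r' - 𝒞 l| + |rj - 𝒞 l| - g |ri - 𝒞 l|) := by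
    refine Finset.sum_le_sum fun l _ => ?_
    exact key_entry g hg hg0 ri rj r' (𝒞 l) hij hr'1 hr'2
  simp only [Finset.sum_sub_distrib, Finset.sum_add_distrib, Finset.sum_neg_distrib] at hsum
  simp only [TcolD, TrowD]
  linarith

/-- One-dimensional facility setting (row payoff `−|r−c|`, column payoff `g(|r−c|)`, `g`
antitone on `[0,∞)` with `g 0 = 0`): for `r^i < r^j` in `S`, some column profile with all
entries in `[r^i, r^j]` minimizes the length-2 alternating path cost
`T_{r^i}(𝒞) + T_𝒞(r^j)`; concretely, clamping the entries of any profile into `[r^i, r^j]`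
does not increase that cost. -/
theorem single_peaked_optimal_profile_between_endpoints
    (S : Finset ℝ) (hS : S.Nonempty) (k : ℕ)
    (g : ℝ → ℝ) (hg : AntitoneOn g (Set.Ici 0)) (hg0 : g 0 = 0)
    (ri rj : ℝ) (hri : ri ∈ S) (hrj : rj ∈ S) (hij : ri < rj) :
    (∃ 𝒞 : Fin k → ℝ, (∀ l, 𝒞 l ∈ S) ∧ (∀ l, ri ≤ 𝒞 l ∧ 𝒞 l ≤ rj) ∧
      ∀ 𝒞' : Fin k → ℝ, (∀ l, 𝒞' l ∈ S) →
        TcolD S hS g ri 𝒞 + TrowD S hS 𝒞 rj ≤ TcolD S hS g ri 𝒞' + TrowD S hS 𝒞' rj) ∧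
    (∀ 𝒞 : Fin k → ℝ, (∀ l, 𝒞 l ∈ S) →
      TcolD S hS g ri (fun l => if 𝒞 l < ri then ri else if rj < 𝒞 l then rj else 𝒞 l)
          + TrowD S hS (fun l => if 𝒞 l < ri then ri else if rj < 𝒞 l then rj else 𝒞 l) rj ≤
        TcolD S hS g ri 𝒞 + TrowD S hS 𝒞 rj) := by
  constructor
  · have hF : (Fintype.piFinset (fun _ : Fin k => S)).Nonempty := by
      refine ⟨fun _ => hS.choose, ?_⟩
      simp only [Fintype.mem_piFinset]
      exact fun _ => hS.choose_spec
    obtain ⟨𝒞₀, h𝒞₀F, hmin⟩ := (Fintype.piFinset (fun _ : Fin k => S)).exists_min_image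
      (fun 𝒞 => TcolD S hS g ri 𝒞 + TrowD S hS 𝒞 rj) hF
    have h𝒞₀ : ∀ l, 𝒞₀ l ∈ S := Fintype.mem_piFinset.mp h𝒞₀F
    refine ⟨fun l => if 𝒞₀ l < ri then ri else if rj < 𝒞₀ l then rj else 𝒞₀ l,
      fun l => ?_, fun l => ?_, fun 𝒞' h𝒞' => ?_⟩
    · dsimp only
      split_ifs <;> first | assumption | exact h𝒞₀ l
    · dsimp only
      constructor <;> (split_ifs with h h' <;> linarith)
    · calc _ ≤ TcolD S hS g ri 𝒞₀ + TrowD S hS 𝒞₀ rj :=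
            cost_clamp_le S hS k g hg hg0 ri rj hri hrj hij 𝒞₀
        _ ≤ _ := hmin 𝒞' (Fintype.mem_piFinset.mpr h𝒞')
  · intro 𝒞 _
    exact cost_clamp_le S hS k g hg hg0 ri rj hri hrj hij 𝒞
end
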